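/- Let D ∈ ℝ^{n×n} be symmetric, E ∈ ℝ^{n×n}, C = D·E, and G = C + Cᵀ − EᵀDE. Suppose G is positive semidefinite and a, b ∈ ℝⁿ satisfy aᵀEᵀDE(a − b) ≥ (1/2)·(a − b)ᵀ(Cᵀ + C)(a − b). Then (Ea)ᵀD(Ea) − (Eb)ᵀD(Eb) ≥ (a − b)ᵀG(a − b) ≥ 0; in particular (Eb)ᵀD(Eb) ≤ (Ea)ᵀD(Ea). -/

import Mathlib

open Matrix

lemma quad_eq {n : ℕ} (D E : Matrix (Fin n) (Fin n) ℝ) (v w : Fin n → ℝ) :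
    (E *ᵥ v) ⬝ᵥ (D *ᵥ (E *ᵥ w)) = v ⬝ᵥ ((Eᵀ * D * E) *ᵥ w) := by
  rw [← mulVec_mulVec, ← mulVec_mulVec]
  symm
  rw [dotProduct_mulVec, vecMul_transpose]

/-- Monotone nonincreasing property of `‖E(wᵏ − w̃ᵏ)‖_D²` in the nonergodic rate
analysis of neADMM: for symmetric `D`, `C = D·E`, `G = C + Cᵀ − EᵀDE` positive
semidefinite, and `a, b` with `aᵀEᵀDE(a − b) ≥ ½(a − b)ᵀ(Cᵀ + C)(a − b)`, one has
`‖Ea‖_D² − ‖Eb‖_D² ≥ ‖a − b‖_G² ≥ 0`; in particular `‖Eb‖_D² ≤ ‖Ea‖_D²`. -/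
theorem neADMM_nonergodic_monotone {n : ℕ}
    (D E : Matrix (Fin n) (Fin n) ℝ) (hD : D.IsSymm)
    (C G : Matrix (Fin n) (Fin n) ℝ) (hC : C = D * E) (hG : G = C + Cᵀ - Eᵀ * D * E)
    (hGpsd : G.PosSemidef) (a b : Fin n → ℝ)
    (hkey : (1 / 2) * ((a - b) ⬝ᵥ ((Cᵀ + C) *ᵥ (a - b))) ≤
      a ⬝ᵥ ((Eᵀ * D * E) *ᵥ (a - b))) :
    (a - b) ⬝ᵥ (G *ᵥ (a - b)) ≤
        (E *ᵥ a) ⬝ᵥ (D *ᵥ (E *ᵥ a)) - (E *ᵥ b) ⬝ᵥ (D *ᵥ (E *ᵥ b)) ∧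
    0 ≤ (a - b) ⬝ᵥ (G *ᵥ (a - b)) ∧
    (E *ᵥ b) ⬝ᵥ (D *ᵥ (E *ᵥ b)) ≤ (E *ᵥ a) ⬝ᵥ (D *ᵥ (E *ᵥ a)) := by
  set M := Eᵀ * D * E with hM
  have hMsymm : Mᵀ = M := by
    rw [hM, transpose_mul, transpose_mul, transpose_transpose, hD.eq, Matrix.mul_assoc]
  have hsymm : ∀ v w : Fin n → ℝ, v ⬝ᵥ (M *ᵥ w) = w ⬝ᵥ (M *ᵥ v) := by
    intro v w
    rw [dotProduct_mulVec, ← mulVec_transpose, hMsymm, dotProduct_comm]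
  have hnng : 0 ≤ (a - b) ⬝ᵥ (G *ᵥ (a - b)) := by simpa using hGpsd.dotProduct_mulVec_nonneg (a - b)
  have hGq : (a - b) ⬝ᵥ (G *ᵥ (a - b)) =
      (a - b) ⬝ᵥ ((Cᵀ + C) *ᵥ (a - b)) - (a - b) ⬝ᵥ (M *ᵥ (a - b)) := by
    rw [hG, sub_mulVec, dotProduct_sub, add_comm C Cᵀ]
  have hid : (E *ᵥ a) ⬝ᵥ (D *ᵥ (E *ᵥ a)) - (E *ᵥ b) ⬝ᵥ (D *ᵥ (E *ᵥ b)) =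
      2 * (a ⬝ᵥ (M *ᵥ (a - b))) - (a - b) ⬝ᵥ (M *ᵥ (a - b)) := by
    rw [quad_eq, quad_eq, ← hM]
    have hba : b ⬝ᵥ (M *ᵥ a) = a ⬝ᵥ (M *ᵥ b) := hsymm b a
    simp only [mulVec_sub, dotProduct_sub, sub_dotProduct, hba]
    ring
  have h1 : (a - b) ⬝ᵥ (G *ᵥ (a - b)) ≤
      (E *ᵥ a) ⬝ᵥ (D *ᵥ (E *ᵥ a)) - (E *ᵥ b) ⬝ᵥ (D *ᵥ (E *ᵥ b)) := by
    rw [hGq, hid]; linarith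
  exact ⟨h1, hnng, by linarith⟩
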